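/- Let K be a number field with ring of integers O_K, let 𝔮 be a prime ideal of O_K not dividing 2, and let u, v, w ∈ O_K be non-zero with u + v + w = 0. Let j be the j-invariant of the elliptic curve E: y² = x(x − u)(x + v), so j = c₄³/Δ with c₄ = 16(u² − vw) and Δ = 16u²v²w². Then ord_𝔮(j) ≥ 0 if and only if ord_𝔮(u) = ord_𝔮(v) = ord_𝔮(w). Moreover, if these three valuations are not all equal, then ord_𝔮(j) = 6s − 2(ord_𝔮(u) + ord_𝔮(v) + ord_𝔮(w)) < 0, where s = min{ord_𝔮(u), ord_𝔮(v), ord_𝔮(w)}. -/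

import Mathlib

open NumberField IsDedekindDomain

open scoped Classical in
/-- The normalized `q`-adic valuation `ord_q : K → ℤ ∪ {+∞}` on the fraction field `K`
of a Dedekind domain `R`, attached to a non-zero prime `q` of `R`; `ord_q (0) = +∞`. -/
noncomputable def ordAt {R : Type*} [CommRing R] [IsDedekindDomain R] {K : Type*} [Field K]
    [Algebra R K] [IsFractionRing R K] (q : HeightOneSpectrum R) (x : K) : WithTop ℤ :=
  if hx : x = 0 then ⊤
  else ((-Multiplicative.toAdd (WithZero.unzero (((q.valuation K).ne_zero_iff).mpr hx)) : ℤ) : WithTop ℤ)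

open Multiplicative

private lemma zm_mul (x y : ℤ) : ((ofAdd x : Multiplicative ℤ) : WithZero (Multiplicative ℤ)) *
    (ofAdd y : Multiplicative ℤ) = ((ofAdd (x + y) : Multiplicative ℤ) : WithZero (Multiplicative ℤ)) := by
  rw [← WithZero.coe_mul, ← ofAdd_add]

private lemma zm_div (x y : ℤ) : ((ofAdd x : Multiplicative ℤ) : WithZero (Multiplicative ℤ)) /
    (ofAdd y : Multiplicative ℤ) = ((ofAdd (x - y) : Multiplicative ℤ) : WithZero (Multiplicative ℤ)) := by
  rw [← WithZero.coe_div, ← ofAdd_sub]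

private lemma zm_pow (x : ℤ) (n : ℕ) : ((ofAdd x : Multiplicative ℤ) : WithZero (Multiplicative ℤ)) ^ n =
    ((ofAdd ((n : ℤ) * x) : Multiplicative ℤ) : WithZero (Multiplicative ℤ)) := by
  rw [← WithZero.coe_pow]
  norm_cast

private lemma zm_le (x y : ℤ) : ((ofAdd x : Multiplicative ℤ) : WithZero (Multiplicative ℤ)) ≤
    (ofAdd y : Multiplicative ℤ) ↔ x ≤ y := by
  rw [WithZero.coe_le_coe, Multiplicative.ofAdd_le]

private lemma zm_lt (x y : ℤ) : ((ofAdd x : Multiplicative ℤ) : WithZero (Multiplicative ℤ)) <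
    (ofAdd y : Multiplicative ℤ) ↔ x < y := by
  rw [WithZero.coe_lt_coe, Multiplicative.ofAdd_lt]

private lemma ordAt_eq_of_valuation {R : Type*} [CommRing R] [IsDedekindDomain R] {K : Type*}
    [Field K] [Algebra R K] [IsFractionRing R K] (q : HeightOneSpectrum R) {x : K} (hx : x ≠ 0)
    {n : ℤ} (h : (q.valuation K) x = ((ofAdd (-n) : Multiplicative ℤ) : WithZero (Multiplicative ℤ))) :
    ordAt q x = (n : WithTop ℤ) := by
  rw [ordAt, dif_neg hx]
  have h2 : WithZero.unzero (((q.valuation K).ne_zero_iff).mpr hx) = ofAdd (-n) := by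
    apply WithZero.coe_inj.mp
    rw [WithZero.coe_unzero, h]
  rw [h2, toAdd_ofAdd, neg_neg]

private lemma exists_ordAt {R : Type*} [CommRing R] [IsDedekindDomain R] {K : Type*}
    [Field K] [Algebra R K] [IsFractionRing R K] (q : HeightOneSpectrum R) {x : K} (hx : x ≠ 0) :
    ∃ n : ℤ, (q.valuation K) x = ((ofAdd (-n) : Multiplicative ℤ) : WithZero (Multiplicative ℤ))
      ∧ ordAt q x = (n : WithTop ℤ) := by
  refine ⟨-Multiplicative.toAdd (WithZero.unzero (((q.valuation K).ne_zero_iff).mpr hx)), ?_, ?_⟩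
  · rw [neg_neg, ofAdd_toAdd, WithZero.coe_unzero]
  · rw [ordAt, dif_neg hx]

/-- **Integrality of the `j`-invariant at odd primes (Lemma 3.2).**
Let `K` be a number field, `𝔮` a prime of `𝓞 K` not dividing `2`, and `u, v, w ∈ 𝓞 K`
non-zero with `u + v + w = 0`. Let `j = c₄³/Δ` be the `j`-invariant of
`y² = x(x − u)(x + v)`, where `c₄ = 16(u² − vw)` and `Δ = 16u²v²w²`. Then
`ord_𝔮(j) ≥ 0` if and only if `ord_𝔮(u) = ord_𝔮(v) = ord_𝔮(w)`; and if these three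
valuations are not all equal then
`ord_𝔮(j) = 6s − 2(ord_𝔮(u) + ord_𝔮(v) + ord_𝔮(w)) < 0`, where `s` is their minimum. -/
theorem j_invariant_integral_iff_equal_valuations (K : Type*) [Field K] [NumberField K]
    (q : HeightOneSpectrum (𝓞 K)) (hq2 : (2 : 𝓞 K) ∉ q.asIdeal)
    (u v w : 𝓞 K) (hu : u ≠ 0) (hv : v ≠ 0) (hw : w ≠ 0) (hsum : u + v + w = 0)
    (j : K) (hj : j = (algebraMap (𝓞 K) K (16 * (u ^ 2 - v * w))) ^ 3 /
      algebraMap (𝓞 K) K (16 * u ^ 2 * v ^ 2 * w ^ 2)) :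
    (0 ≤ ordAt q j ↔
      (ordAt q (algebraMap (𝓞 K) K u) = ordAt q (algebraMap (𝓞 K) K v) ∧
       ordAt q (algebraMap (𝓞 K) K v) = ordAt q (algebraMap (𝓞 K) K w))) ∧
    (¬ (ordAt q (algebraMap (𝓞 K) K u) = ordAt q (algebraMap (𝓞 K) K v) ∧
        ordAt q (algebraMap (𝓞 K) K v) = ordAt q (algebraMap (𝓞 K) K w)) →
      ∃ tu tv tw : ℤ,
        ordAt q (algebraMap (𝓞 K) K u) = tu ∧
        ordAt q (algebraMap (𝓞 K) K v) = tv ∧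
        ordAt q (algebraMap (𝓞 K) K w) = tw ∧
        ordAt q j = ((6 * min tu (min tv tw) - 2 * (tu + tv + tw) : ℤ) : WithTop ℤ) ∧
        6 * min tu (min tv tw) - 2 * (tu + tv + tw) < 0) := by
  have hinj : Function.Injective (algebraMap (𝓞 K) K) := IsFractionRing.injective _ _
  have hfu : algebraMap (𝓞 K) K u ≠ 0 := (map_ne_zero_iff _ hinj).mpr hu
  have hfv : algebraMap (𝓞 K) K v ≠ 0 := (map_ne_zero_iff _ hinj).mpr hv
  have hfw : algebraMap (𝓞 K) K w ≠ 0 := (map_ne_zero_iff _ hinj).mpr hw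
  obtain ⟨a, hva, hoa⟩ := exists_ordAt q hfu
  obtain ⟨b, hvb, hob⟩ := exists_ordAt q hfv
  obtain ⟨c, hvc, hoc⟩ := exists_ordAt q hfw
  -- the valuation of 16 is 1
  have h16 : (q.valuation K) (algebraMap (𝓞 K) K 16) = 1 := by
    refine le_antisymm (q.valuation_le_one 16) (not_lt.mp fun hlt => ?_)
    rw [q.valuation_lt_one_iff_dvd, Ideal.dvd_span_singleton] at hlt
    rw [show (16 : 𝓞 K) = 2 ^ 4 by norm_num] at hlt
    exact hq2 (q.isPrime.mem_of_pow_mem 4 hlt)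
  -- the valuation of the discriminant
  have hvΔ : (q.valuation K) (algebraMap (𝓞 K) K (16 * u ^ 2 * v ^ 2 * w ^ 2)) =
      ((ofAdd (-(2 * (a + b + c))) : Multiplicative ℤ) : WithZero (Multiplicative ℤ)) := by
    rw [map_mul, map_mul, map_mul, map_pow, map_pow, map_pow, map_mul, map_mul, map_mul,
      map_pow, map_pow, map_pow, h16, hva, hvb, hvc, one_mul, zm_pow, zm_pow, zm_pow,
      zm_mul, zm_mul]
    congr 2
    ring
  -- ultrametric: minimum is attained twice
  have key : ∀ x y z : 𝓞 K, x + y + z = 0 → ∀ hx : algebraMap (𝓞 K) K x ≠ 0,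
      ∀ p r t : ℤ, (q.valuation K) (algebraMap (𝓞 K) K x) = ((ofAdd (-p) : Multiplicative ℤ) :
        WithZero (Multiplicative ℤ)) →
      (q.valuation K) (algebraMap (𝓞 K) K y) = ((ofAdd (-r) : Multiplicative ℤ) :
        WithZero (Multiplicative ℤ)) →
      (q.valuation K) (algebraMap (𝓞 K) K z) = ((ofAdd (-t) : Multiplicative ℤ) :
        WithZero (Multiplicative ℤ)) → ¬(p < r ∧ p < t) := by
    intro x y z hxyz hx p r t hp hr ht ⟨h1, h2⟩
    have hx' : algebraMap (𝓞 K) K x = -(algebraMap (𝓞 K) K y + algebraMap (𝓞 K) K z) := by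
      rw [← map_add, ← map_neg]
      congr 1
      linear_combination hxyz
    have hle := (q.valuation K).map_add (algebraMap (𝓞 K) K y) (algebraMap (𝓞 K) K z)
    rw [← Valuation.map_neg, ← hx', hp, hr, ht] at hle
    rcases le_max_iff.mp hle with h | h <;> rw [zm_le] at h <;> omega
  have hnla : ¬(a < b ∧ a < c) := key u v w hsum hfu a b c hva hvb hvc
  have hnlb : ¬(b < a ∧ b < c) := key v u w (by linear_combination hsum) hfv b a c hvb hva hvc
  have hnlc : ¬(c < a ∧ c < b) := key w u v (by linear_combination hsum) hfw c a b hvc hva hvb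
  have hordiff : (ordAt q (algebraMap (𝓞 K) K u) = ordAt q (algebraMap (𝓞 K) K v) ∧
      ordAt q (algebraMap (𝓞 K) K v) = ordAt q (algebraMap (𝓞 K) K w)) ↔ (a = b ∧ b = c) := by
    rw [hoa, hob, hoc]
    constructor
    · rintro ⟨h1, h2⟩
      exact ⟨by exact_mod_cast h1, by exact_mod_cast h2⟩
    · rintro ⟨h1, h2⟩
      exact ⟨by exact_mod_cast h1, by exact_mod_cast h2⟩
  by_cases heq : a = b ∧ b = c
  · -- all valuations equal: j is integral
    obtain ⟨hab, hbc⟩ := heq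
    have hint : 0 ≤ ordAt q j := by
      by_cases hj0 : j = 0
      · rw [ordAt, dif_pos hj0]
        exact le_top
      obtain ⟨m, hvj, hoj⟩ := exists_ordAt q hj0
      rw [hoj]
      have hΔne : algebraMap (𝓞 K) K (16 * u ^ 2 * v ^ 2 * w ^ 2) ≠ 0 :=
        (q.valuation K).ne_zero_iff.mp (by rw [hvΔ]; exact WithZero.coe_ne_zero)
      have hjj : j * algebraMap (𝓞 K) K (16 * u ^ 2 * v ^ 2 * w ^ 2) =
          (algebraMap (𝓞 K) K (16 * (u ^ 2 - v * w))) ^ 3 := by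
        rw [hj, div_mul_cancel₀ _ hΔne]
      -- bound the valuation of c₄
      have hc4le : (q.valuation K) (algebraMap (𝓞 K) K (16 * (u ^ 2 - v * w))) ≤
          ((ofAdd (-(2 * a)) : Multiplicative ℤ) : WithZero (Multiplicative ℤ)) := by
        rw [map_mul, map_mul, h16, one_mul]
        have hsub : algebraMap (𝓞 K) K (u ^ 2 - v * w) =
            (algebraMap (𝓞 K) K u) ^ 2 - algebraMap (𝓞 K) K v * algebraMap (𝓞 K) K w := by
          rw [map_sub, map_pow, map_mul]
        rw [hsub]
        refine le_trans (Valuation.map_sub (q.valuation K) _ _) (max_le ?_ ?_)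
        · rw [map_pow, hva, zm_pow, zm_le]; omega
        · rw [map_mul, hvb, hvc, zm_mul, zm_le]; omega
      have hvmul := congrArg (q.valuation K) hjj
      rw [map_mul, map_pow, hvΔ] at hvmul
      have hle2 : (q.valuation K) j *
          ((ofAdd (-(2 * (a + b + c))) : Multiplicative ℤ) : WithZero (Multiplicative ℤ)) ≤
          1 * ((ofAdd (-(2 * (a + b + c))) : Multiplicative ℤ) : WithZero (Multiplicative ℤ)) := by
        rw [hvmul, one_mul]
        calc (q.valuation K) (algebraMap (𝓞 K) K (16 * (u ^ 2 - v * w))) ^ 3 ≤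
            ((ofAdd (-(2 * a)) : Multiplicative ℤ) : WithZero (Multiplicative ℤ)) ^ 3 :=
              pow_le_pow_left' hc4le 3
          _ = ((ofAdd (-(2 * (a + b + c))) : Multiplicative ℤ) : WithZero (Multiplicative ℤ)) := by
              rw [zm_pow]; congr 2; omega
      have hle3 : (q.valuation K) j ≤ 1 :=
        le_of_mul_le_mul_right hle2 (zero_lt_iff.mpr WithZero.coe_ne_zero)
      rw [hvj, show (1 : WithZero (Multiplicative ℤ)) =
        ((ofAdd (-(0 : ℤ)) : Multiplicative ℤ) : WithZero (Multiplicative ℤ)) by simp,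
        zm_le] at hle3
      exact_mod_cast (by omega : (0 : ℤ) ≤ m)
    exact ⟨⟨fun _ => hordiff.mpr ⟨hab, hbc⟩, fun _ => hint⟩,
      fun hne => absurd (hordiff.mpr ⟨hab, hbc⟩) hne⟩
  · -- valuations not all equal
    have hd : (b = c ∧ b < a) ∨ (a = c ∧ a < b) ∨ (a = b ∧ a < c) := by
      by_contra hcon
      push_neg at hcon
      rcases not_and_or.mp heq with h | h <;> omega
    set s := min a (min b c) with hs
    have hsval : (q.valuation K) (algebraMap (𝓞 K) K (u ^ 2 - v * w)) =
        ((ofAdd (-(2 * s)) : Multiplicative ℤ) : WithZero (Multiplicative ℤ)) := by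
      rcases hd with ⟨hbc, hba⟩ | ⟨hac, hab⟩ | ⟨hab, hac⟩
      · have hsb : s = b := by omega
        have hsub : algebraMap (𝓞 K) K (u ^ 2 - v * w) =
            (algebraMap (𝓞 K) K u) ^ 2 - algebraMap (𝓞 K) K v * algebraMap (𝓞 K) K w := by
          rw [map_sub, map_pow, map_mul]
        rw [hsub, Valuation.map_sub_eq_of_lt_right, map_mul, hvb, hvc, zm_mul, hsb]
        · congr 2; omega
        · rw [map_pow, map_mul, hva, hvb, hvc, zm_pow, zm_mul, zm_lt]; omega
      · have hsa : s = a := by omega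
        have hid : (u ^ 2 - v * w : 𝓞 K) = v ^ 2 - w * u := by linear_combination (u - v) * hsum
        have hsub : algebraMap (𝓞 K) K (v ^ 2 - w * u) =
            (algebraMap (𝓞 K) K v) ^ 2 - algebraMap (𝓞 K) K w * algebraMap (𝓞 K) K u := by
          rw [map_sub, map_pow, map_mul]
        rw [hid, hsub, Valuation.map_sub_eq_of_lt_right, map_mul, hvc, hva, zm_mul, hsa]
        · congr 2; omega
        · rw [map_pow, map_mul, hvb, hvc, hva, zm_pow, zm_mul, zm_lt]; omega
      · have hsa : s = a := by omega
        have hid : (u ^ 2 - v * w : 𝓞 K) = w ^ 2 - u * v := by linear_combination (u - w) * hsum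
        have hsub : algebraMap (𝓞 K) K (w ^ 2 - u * v) =
            (algebraMap (𝓞 K) K w) ^ 2 - algebraMap (𝓞 K) K u * algebraMap (𝓞 K) K v := by
          rw [map_sub, map_pow, map_mul]
        rw [hid, hsub, Valuation.map_sub_eq_of_lt_right, map_mul, hva, hvb, zm_mul, hsa]
        · congr 2; omega
        · rw [map_pow, map_mul, hvc, hva, hvb, zm_pow, zm_mul, zm_lt]; omega
    have hvj : (q.valuation K) j =
        ((ofAdd (-(6 * s - 2 * (a + b + c))) : Multiplicative ℤ) : WithZero (Multiplicative ℤ)) := by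
      rw [hj, map_div₀, map_pow,
        show (algebraMap (𝓞 K) K) (16 * (u ^ 2 - v * w)) =
          algebraMap (𝓞 K) K 16 * algebraMap (𝓞 K) K (u ^ 2 - v * w) from map_mul _ _ _,
        map_mul, h16, hsval, one_mul, hvΔ, zm_pow, zm_div]
      congr 2
      push_cast
      ring
    have hj0 : j ≠ 0 := (q.valuation K).ne_zero_iff.mp (by rw [hvj]; exact WithZero.coe_ne_zero)
    have hoj : ordAt q j = ((6 * s - 2 * (a + b + c) : ℤ) : WithTop ℤ) :=
      ordAt_eq_of_valuation q hj0 hvj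
    have hneg : 6 * s - 2 * (a + b + c) < 0 := by omega
    have hnotle : ¬(0 ≤ ordAt q j) := by
      rw [hoj]
      intro hcon
      have : (0 : ℤ) ≤ 6 * s - 2 * (a + b + c) := by exact_mod_cast hcon
      omega
    refine ⟨⟨fun hle => absurd hle hnotle, fun hordeq => absurd (hordiff.mp hordeq) heq⟩,
      fun _ => ⟨a, b, c, hoa, hob, hoc, ?_, ?_⟩⟩
    · rw [hoj]
    · exact hneg
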